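/- Denoising Score Identity (additive noise): for every y ∈ ℝ^d, ∇ log p_Y(y) = ∫ ∇ log p_W(y − x) · p_{X|Y}(x|y) dx, where ∇ log p_W(y − x) is the gradient of w ↦ log p_W(w) evaluated at w = y − x. -/

import Mathlib

open MeasureTheory Real

/-- Gradient of the logarithm of a positive function. -/
lemma hasGradientAt_log_aux {F : Type*} [NormedAddCommGroup F] [InnerProductSpace ℝ F]
    [CompleteSpace F] {f : F → ℝ} {f' : F} {x : F}
    (hf : HasGradientAt f f' x) (hx : f x ≠ 0) :
    HasGradientAt (fun y => Real.log (f y)) ((f x)⁻¹ • f') x := by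
  rw [hasGradientAt_iff_hasFDerivAt] at hf ⊢
  simpa [_root_.map_smul] using hf.log hx

/-- **Denoising Score Identity** (additive noise model `Y = X + W`):
for every `y`, `∇ log p_Y(y) = ∫ ∇ log p_W(y - x) p_{X|Y}(x|y) dx`. -/
theorem denoising_score_identity
    (d : ℕ) (hd : 1 ≤ d)
    (pX pW : EuclideanSpace ℝ (Fin d) → ℝ)
    (hpX_pos : ∀ x, 0 < pX x) (hpW_pos : ∀ w, 0 < pW w)
    (hpX_diff : ContDiff ℝ 1 pX) (hpW_diff : ContDiff ℝ 1 pW)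
    (hpX_prob : ∫ x, pX x = 1) (hpW_prob : ∫ w, pW w = 1)
    (pY : EuclideanSpace ℝ (Fin d) → ℝ)
    (hpY : ∀ y, pY y = ∫ x, pX x * pW (y - x))
    (pXgY : EuclideanSpace ℝ (Fin d) → EuclideanSpace ℝ (Fin d) → ℝ)
    (hpXgY : ∀ x y, pXgY x y = pX x * pW (y - x) / pY y)
    (hInt : ∀ y, Integrable (fun x => pX x * ‖gradient pW (y - x)‖))
    (hDom : ∀ y, ∃ ε > 0, ∃ g : EuclideanSpace ℝ (Fin d) → ℝ, Integrable g ∧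
      ∀ y', dist y' y < ε → ∀ x, pX x * ‖gradient pW (y' - x)‖ ≤ g x) :
    ∀ y, gradient (fun y' => Real.log (pY y')) y
      = ∫ x, pXgY x y • gradient (fun w => Real.log (pW w)) (y - x) := by
  have contX : Continuous pX := hpX_diff.continuous
  have contW : Continuous pW := hpW_diff.continuous
  have fderivW_cont : Continuous (fderiv ℝ pW) := hpW_diff.continuous_fderiv one_ne_zero
  have gradW_eq : ∀ w : (EuclideanSpace ℝ (Fin d)), gradient pW w = (InnerProductSpace.toDual ℝ (EuclideanSpace ℝ (Fin d))).symm (fderiv ℝ pW w) :=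
    fun w => rfl
  have gradW_cont : Continuous (fun w : (EuclideanSpace ℝ (Fin d)) => gradient pW w) := by
    simp only [gradW_eq]
    exact (InnerProductSpace.toDual ℝ (EuclideanSpace ℝ (Fin d))).symm.continuous.comp fderivW_cont
  have gradW_norm : ∀ w : (EuclideanSpace ℝ (Fin d)), ‖gradient pW w‖ = ‖fderiv ℝ pW w‖ := by
    intro w
    rw [gradW_eq w, LinearIsometryEquiv.norm_map]
  -- integrability of the densities
  have pW_int : Integrable pW := by
    by_contra h
    rw [integral_undef h] at hpW_prob
    exact one_ne_zero hpW_prob.symm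
  have pX_int : Integrable pX := by
    by_contra h
    rw [integral_undef h] at hpX_prob
    exact one_ne_zero hpX_prob.symm
  intro y
  obtain ⟨ε, εpos, g, g_int, hg⟩ := hDom y
  -- a.e. y', the convolution integrand is integrable
  have h_ae : ∀ᵐ y' : (EuclideanSpace ℝ (Fin d)), Integrable (fun x => pX x * pW (y' - x)) := by
    have hcont2 : Continuous (fun p : (EuclideanSpace ℝ (Fin d)) × (EuclideanSpace ℝ (Fin d)) => pX p.2 * pW (p.1 - p.2)) :=
      (contX.comp continuous_snd).mul (contW.comp (continuous_fst.sub continuous_snd))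
    have hmeas : Measurable (Function.uncurry fun (y' : (EuclideanSpace ℝ (Fin d))) (x : (EuclideanSpace ℝ (Fin d))) =>
        ENNReal.ofReal (pX x * pW (y' - x))) :=
      hcont2.measurable.ennreal_ofReal
    have hWlin : ∫⁻ w : (EuclideanSpace ℝ (Fin d)), ENNReal.ofReal (pW w) = 1 := by
      rw [← ofReal_integral_eq_lintegral_ofReal pW_int (ae_of_all _ fun w => (hpW_pos w).le),
        hpW_prob, ENNReal.ofReal_one]
    have hinner : ∀ x : (EuclideanSpace ℝ (Fin d)), (∫⁻ y' : (EuclideanSpace ℝ (Fin d)), ENNReal.ofReal (pX x * pW (y' - x)))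
        = ENNReal.ofReal (pX x) := by
      intro x
      have h1 : ∀ y' : (EuclideanSpace ℝ (Fin d)), ENNReal.ofReal (pX x * pW (y' - x))
          = ENNReal.ofReal (pX x) * ENNReal.ofReal (pW (y' - x)) :=
        fun y' => ENNReal.ofReal_mul (hpX_pos x).le
      simp_rw [h1]
      rw [lintegral_const_mul' _ _ ENNReal.ofReal_ne_top,
        lintegral_sub_right_eq_self (fun w : (EuclideanSpace ℝ (Fin d)) => ENNReal.ofReal (pW w)) x, hWlin, mul_one]
    have hfin : (∫⁻ y' : (EuclideanSpace ℝ (Fin d)), ∫⁻ x : (EuclideanSpace ℝ (Fin d)), ENNReal.ofReal (pX x * pW (y' - x))) ≠ ⊤ := by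
      rw [lintegral_lintegral_swap hmeas.aemeasurable]
      simp_rw [hinner]
      rw [← ofReal_integral_eq_lintegral_ofReal pX_int (ae_of_all _ fun x => (hpX_pos x).le),
        hpX_prob]
      simp
    have hmeas' : Measurable (fun y' : (EuclideanSpace ℝ (Fin d)) => ∫⁻ x : (EuclideanSpace ℝ (Fin d)), ENNReal.ofReal (pX x * pW (y' - x))) :=
      hmeas.lintegral_prod_right'
    have := ae_lt_top hmeas' hfin
    filter_upwards [this] with y' hy'
    refine ⟨(contX.mul (contW.comp (continuous_const.sub continuous_id))).aestronglyMeasurable, ?_⟩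
    rw [hasFiniteIntegral_iff_ofReal (ae_of_all _ fun x =>
      (mul_pos (hpX_pos x) (hpW_pos _)).le)]
    exact hy'
  -- pick an integrability point in the ball
  obtain ⟨y₁, hy₁ball, int_y₁⟩ :
      ∃ y₁ : (EuclideanSpace ℝ (Fin d)), dist y₁ y < ε ∧ Integrable (fun x => pX x * pW (y₁ - x)) := by
    by_contra hcon
    push_neg at hcon
    have hsub : Metric.ball y ε ⊆ {y' : (EuclideanSpace ℝ (Fin d)) | ¬ Integrable (fun x => pX x * pW (y' - x))} := by
      intro y' hy'
      exact hcon y' (Metric.mem_ball.mp hy')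
    have h0 : volume {y' : (EuclideanSpace ℝ (Fin d)) | ¬ Integrable (fun x => pX x * pW (y' - x))} = 0 := h_ae
    have := measure_mono_null hsub h0
    exact absurd this (Metric.measure_ball_pos volume y εpos).ne'
  -- derivative of the integrand in the y variable
  have hderiv : ∀ (x y' : (EuclideanSpace ℝ (Fin d))),
      HasFDerivAt (fun z : (EuclideanSpace ℝ (Fin d)) => pX x * pW (z - x)) (pX x • fderiv ℝ pW (y' - x)) y' := by
    intro x y'
    have h1 : HasFDerivAt (fun z : (EuclideanSpace ℝ (Fin d)) => z - x) (ContinuousLinearMap.id ℝ (EuclideanSpace ℝ (Fin d))) y' :=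
      (hasFDerivAt_id y').sub_const x
    have h2 : HasFDerivAt pW (fderiv ℝ pW (y' - x)) (y' - x) :=
      (hpW_diff.differentiable one_ne_zero (y' - x)).hasFDerivAt
    have := (h2.comp y' h1).const_mul (pX x)
    simpa using this
  have hnorm : ∀ x y' : (EuclideanSpace ℝ (Fin d)), ‖pX x • fderiv ℝ pW (y' - x)‖ = pX x * ‖gradient pW (y' - x)‖ := by
    intro x y'
    rw [norm_smul, Real.norm_of_nonneg (hpX_pos x).le, gradW_norm]
  -- integrability at y via mean value inequality
  have int_y : Integrable (fun x => pX x * pW (y - x)) := by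
    have hMVT : ∀ x : (EuclideanSpace ℝ (Fin d)), ‖pX x * pW (y - x) - pX x * pW (y₁ - x)‖ ≤ g x * ‖y - y₁‖ := by
      intro x
      refine Convex.norm_image_sub_le_of_norm_hasFDerivWithin_le
        (f := fun z : (EuclideanSpace ℝ (Fin d)) => pX x * pW (z - x)) (f' := fun z : (EuclideanSpace ℝ (Fin d)) => pX x • fderiv ℝ pW (z - x))
        (s := Metric.ball y ε) (fun z _ => (hderiv x z).hasFDerivWithinAt) ?_
        (convex_ball y ε) (Metric.mem_ball.mpr hy₁ball) (Metric.mem_ball_self εpos)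
      intro z hz
      rw [hnorm]
      exact hg z (Metric.mem_ball.mp hz) x
    have hsub : Integrable (fun x => pX x * pW (y - x) - pX x * pW (y₁ - x)) := by
      refine Integrable.mono' (g_int.mul_const ‖y - y₁‖) ?_ (ae_of_all _ hMVT)
      exact ((contX.mul (contW.comp (continuous_const.sub continuous_id))).sub
        (contX.mul (contW.comp (continuous_const.sub continuous_id)))).aestronglyMeasurable
    have := int_y₁.add hsub
    exact this.congr (Filter.Eventually.of_forall fun x => by simp)
  -- differentiation under the integral sign
  have hF : HasFDerivAt (fun y' : (EuclideanSpace ℝ (Fin d)) => ∫ x, pX x * pW (y' - x))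
      (∫ x, pX x • fderiv ℝ pW (y - x)) y := by
    refine hasFDerivAt_integral_of_dominated_of_fderiv_le
      (F' := fun (y' : (EuclideanSpace ℝ (Fin d))) (x : (EuclideanSpace ℝ (Fin d))) => pX x • fderiv ℝ pW (y' - x)) (bound := g) (Metric.ball_mem_nhds y εpos)
      (Filter.Eventually.of_forall fun y' =>
        ((contX.mul (contW.comp (continuous_const.sub continuous_id))).aestronglyMeasurable))
      int_y
      ((contX.smul (fderivW_cont.comp (continuous_const.sub continuous_id))).aestronglyMeasurable)
      (ae_of_all _ fun x y' hy' => ?_) g_int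
      (ae_of_all _ fun x y' _ => hderiv x y')
    rw [hnorm]
    exact hg y' (Metric.mem_ball.mp hy') x
  have hFY : HasFDerivAt pY (∫ x, pX x • fderiv ℝ pW (y - x)) y := by
    have hpYfun : pY = fun y' : (EuclideanSpace ℝ (Fin d)) => ∫ x, pX x * pW (y' - x) := funext hpY
    rw [hpYfun]
    exact hF
  -- positivity of pY y
  have hpY_pos : 0 < pY y := by
    rw [hpY y]
    rw [integral_pos_iff_support_of_nonneg (fun x => (mul_pos (hpX_pos x) (hpW_pos _)).le) int_y]
    have : Function.support (fun x : (EuclideanSpace ℝ (Fin d)) => pX x * pW (y - x)) = Set.univ := by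
      ext x
      simp only [Function.mem_support, Set.mem_univ, iff_true, ne_eq, mul_eq_zero, not_or]
      exact ⟨(hpX_pos x).ne', (hpW_pos _).ne'⟩
    rw [this]
    exact isOpen_univ.measure_pos volume ⟨y, trivial⟩
  -- integrability of the gradient integrand
  have int_grad : Integrable (fun x : (EuclideanSpace ℝ (Fin d)) => pX x • gradient pW (y - x)) := by
    refine Integrable.mono' (hInt y) ?_ (ae_of_all _ fun x => ?_)
    · exact (contX.smul (gradW_cont.comp (continuous_const.sub continuous_id))).aestronglyMeasurable
    · rw [norm_smul, Real.norm_of_nonneg (hpX_pos x).le]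
  -- pY has a gradient, given by the integral of the gradients
  have hGY : HasGradientAt pY (∫ x, pX x • gradient pW (y - x)) y := by
    rw [hasGradientAt_iff_hasFDerivAt]
    have hc : (InnerProductSpace.toDual ℝ (EuclideanSpace ℝ (Fin d))) (∫ x, pX x • gradient pW (y - x))
        = ∫ x, pX x • fderiv ℝ pW (y - x) := by
      have hc' := (InnerProductSpace.toDual ℝ (EuclideanSpace ℝ (Fin d))).toLinearIsometry.integral_comp_comm
        (μ := volume) (fun x => pX x • gradient pW (y - x))
      simp only [LinearIsometryEquiv.coe_toLinearIsometry] at hc'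
      rw [← hc']
      congr 1
      funext x
      rw [_root_.map_smul]
      congr 1
      exact (InnerProductSpace.toDual ℝ (EuclideanSpace ℝ (Fin d))).apply_symm_apply _
    rw [hc]
    exact hFY
  have hlog : HasGradientAt (fun y' : (EuclideanSpace ℝ (Fin d)) => Real.log (pY y'))
      ((pY y)⁻¹ • ∫ x, pX x • gradient pW (y - x)) y :=
    hasGradientAt_log_aux hGY hpY_pos.ne'
  rw [hlog.gradient]
  -- rewrite the right-hand side
  have hgradlogW : ∀ w : (EuclideanSpace ℝ (Fin d)), gradient (fun w => Real.log (pW w)) w = (pW w)⁻¹ • gradient pW w :=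
    fun w => (hasGradientAt_log_aux
      ((hpW_diff.differentiable one_ne_zero w).hasGradientAt) (hpW_pos w).ne').gradient
  have hintegrand : ∀ x : (EuclideanSpace ℝ (Fin d)), pXgY x y • gradient (fun w => Real.log (pW w)) (y - x)
      = (pY y)⁻¹ • (pX x • gradient pW (y - x)) := by
    intro x
    rw [hgradlogW (y - x), hpXgY, smul_smul, smul_smul]
    have hW := (hpW_pos (y - x)).ne'
    have hY := hpY_pos.ne'
    congr 1
    field_simp
  simp_rw [hintegrand]
  rw [integral_smul]
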